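/- Let G and Ĝ be symmetric PSD N×N matrices, ℓ* convex, λN = 1, and define L(α) = −∑ℓ*(α_i) − (1/2)α^T G α, L̂(α) = −∑ℓ*(α_i) − (1/2)α^T Ĝ α on a convex domain K. If α* maximizes L over K and α̂* maximizes L̂ over K, then (α* − α̂*)^T (Ĝ − G) α* ≥ (α̂* − α*)^T G (α̂* − α*) + (α̂* − α*)^T (Ĝ − G)(α̂* − α*). -/

import Mathlib

open Matrix

private lemma dot_symm {N : ℕ} {M : Matrix (Fin N) (Fin N) ℝ} (hM : Mᵀ = M)
    (u v : Fin N → ℝ) : u ⬝ᵥ M.mulVec v = v ⬝ᵥ M.mulVec u := by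
  rw [Matrix.dotProduct_mulVec, ← Matrix.mulVec_transpose, hM, dotProduct_comm]

/-- Key directional optimality inequality for the maximizer of a concave objective
`a ↦ -(∑ lstar (a i)) - (1/2) aᵀ M a` on a convex set. -/
private lemma key {N : ℕ} (K : Set (Fin N → ℝ)) (hK : Convex ℝ K)
    (lstar : ℝ → ℝ) (hl : ConvexOn ℝ Set.univ lstar)
    (M : Matrix (Fin N) (Fin N) ℝ) (hM : Mᵀ = M)
    (x y : Fin N → ℝ) (hx : x ∈ K) (hy : y ∈ K)
    (hmax : ∀ a ∈ K, -(∑ i, lstar (a i)) - (1 / 2) * (a ⬝ᵥ M.mulVec a) ≤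
      -(∑ i, lstar (x i)) - (1 / 2) * (x ⬝ᵥ M.mulVec x))
    (t : ℝ) (ht0 : 0 < t) (ht1 : t ≤ 1) :
    (∑ i, lstar (x i)) - (∑ i, lstar (y i)) ≤
      x ⬝ᵥ M.mulVec (y - x) + (t / 2) * ((y - x) ⬝ᵥ M.mulVec (y - x)) := by
  set z : Fin N → ℝ := (1 - t) • x + t • y with hzdef
  have hz : z ∈ K := hK hx hy (by linarith) ht0.le (by ring)
  have hf : ∑ i, lstar (z i) ≤ (1 - t) * (∑ i, lstar (x i)) + t * (∑ i, lstar (y i)) := by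
    rw [Finset.mul_sum, Finset.mul_sum, ← Finset.sum_add_distrib]
    refine Finset.sum_le_sum fun i _ => ?_
    have := hl.2 (Set.mem_univ (x i)) (Set.mem_univ (y i)) (by linarith : (0:ℝ) ≤ 1 - t)
      ht0.le (by ring)
    simpa [hzdef, smul_eq_mul] using this
  have hz' : z = x + t • (y - x) := by
    funext i; simp [hzdef]; ring
  have expand : z ⬝ᵥ M.mulVec z =
      x ⬝ᵥ M.mulVec x + (2 * t) * (x ⬝ᵥ M.mulVec (y - x))
        + t ^ 2 * ((y - x) ⬝ᵥ M.mulVec (y - x)) := by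
    rw [hz']
    have hsym := dot_symm hM (y - x) x
    simp only [Matrix.mulVec_add, Matrix.mulVec_smul, dotProduct_add, add_dotProduct,
      dotProduct_smul, smul_dotProduct, smul_eq_mul]
    rw [hsym]; ring
  have hopt := hmax z hz
  have h1 : t * ((∑ i, lstar (x i)) - (∑ i, lstar (y i))) ≤
      t * (x ⬝ᵥ M.mulVec (y - x) + (t / 2) * ((y - x) ⬝ᵥ M.mulVec (y - x))) := by
    nlinarith [hopt, hf, expand]
  exact le_of_mul_le_mul_left h1 ht0

/-- Comparison of the maximizers of `L` and `L̂` (with `λN = 1`):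
`(α* − α̂*)ᵀ(Ĝ − G)α* ≥ (α̂* − α*)ᵀG(α̂* − α*) + (α̂* − α*)ᵀ(Ĝ − G)(α̂* − α*)`. -/
theorem dual_maximizer_comparison {N : ℕ}
    (K : Set (Fin N → ℝ)) (hK : Convex ℝ K)
    (lstar : ℝ → ℝ) (hl : ConvexOn ℝ Set.univ lstar)
    (G Gh : Matrix (Fin N) (Fin N) ℝ) (hG : G.PosSemidef) (hGh : Gh.PosSemidef)
    (L Lh : (Fin N → ℝ) → ℝ)
    (hL : ∀ a : Fin N → ℝ, L a = -(∑ i, lstar (a i)) - (1 / 2) * (a ⬝ᵥ G.mulVec a))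
    (hLh : ∀ a : Fin N → ℝ, Lh a = -(∑ i, lstar (a i)) - (1 / 2) * (a ⬝ᵥ Gh.mulVec a))
    (as ah : Fin N → ℝ) (hasmem : as ∈ K) (hahmem : ah ∈ K)
    (hasmax : ∀ a ∈ K, L a ≤ L as) (hahmax : ∀ a ∈ K, Lh a ≤ Lh ah) :
    (as - ah) ⬝ᵥ (Gh - G).mulVec as ≥
      (ah - as) ⬝ᵥ G.mulVec (ah - as) + (ah - as) ⬝ᵥ (Gh - G).mulVec (ah - as) := by
  have hGsym : Gᵀ = G := hG.1
  have hGhsym : Ghᵀ = Gh := hGh.1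
  set d : Fin N → ℝ := ah - as with hd
  -- the two key inequalities, for every t ∈ (0,1]
  have hXt : ∀ t : ℝ, 0 < t → t ≤ 1 →
      ah ⬝ᵥ Gh.mulVec d - as ⬝ᵥ G.mulVec d ≤
        (t / 2) * (d ⬝ᵥ G.mulVec d + d ⬝ᵥ Gh.mulVec d) := by
    intro t ht0 ht1
    have h1 := key K hK lstar hl G hGsym as ah hasmem hahmem
      (fun a ha => by rw [← hL, ← hL]; exact hasmax a ha) t ht0 ht1
    have h2 := key K hK lstar hl Gh hGhsym ah as hahmem hasmem
      (fun a ha => by rw [← hLh, ← hLh]; exact hahmax a ha) t ht0 ht1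
    have hneg : as - ah = -d := by rw [hd]; abel
    rw [hneg] at h2
    simp only [Matrix.mulVec_neg, dotProduct_neg, neg_dotProduct, neg_neg] at h2
    rw [← hd] at h1
    linarith
  have hC : 0 ≤ d ⬝ᵥ G.mulVec d + d ⬝ᵥ Gh.mulVec d := add_nonneg (by simpa using hG.dotProduct_mulVec_nonneg d)
    (by simpa using hGh.dotProduct_mulVec_nonneg d)
  set X : ℝ := ah ⬝ᵥ Gh.mulVec d - as ⬝ᵥ G.mulVec d with hXdef
  set C : ℝ := d ⬝ᵥ G.mulVec d + d ⬝ᵥ Gh.mulVec d with hCdef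
  have hX : X ≤ 0 := by
    rcases eq_or_lt_of_le hC with hc0 | hcpos
    · have := hXt 1 one_pos le_rfl
      rw [← hc0] at this
      linarith
    · by_contra hpos
      push_neg at hpos
      set t : ℝ := min 1 (X / C) with htdef
      have ht0 : 0 < t := lt_min one_pos (div_pos hpos hcpos)
      have ht1 : t ≤ 1 := min_le_left _ _
      have hb := hXt t ht0 ht1
      have htC : t * C ≤ X := by
        have : t ≤ X / C := min_le_right _ _
        calc t * C ≤ (X / C) * C := mul_le_mul_of_nonneg_right this hcpos.le
          _ = X := div_mul_cancel₀ X (ne_of_gt hcpos)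
      nlinarith
  -- now unfold X and conclude by bilinearity and symmetry
  have e1 : as ⬝ᵥ Gh.mulVec ah = ah ⬝ᵥ Gh.mulVec as := dot_symm hGhsym as ah
  have e2 : as ⬝ᵥ G.mulVec ah = ah ⬝ᵥ G.mulVec as := dot_symm hGsym as ah
  rw [hXdef] at hX
  simp only [hd, Matrix.sub_mulVec, Matrix.mulVec_sub, dotProduct_sub, sub_dotProduct] at hX ⊢
  linarith [e1, e2, hX]
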